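/- Fix λ ∈ (0, λ₀) and N ∈ ℕ. Then for P-a.e. ω there exists a strictly increasing doubly infinite sequence of integers (n_i)_{i∈ℤ} with n_i → +∞ as i → +∞ and n_i → −∞ as i → −∞, such that n_{i+1} − n_i > 2N for all i, and for every i ∈ ℤ: ω_{n_i−N+1} = ω_{n_i−N+2} = … = ω_{n_i+N} = 1; for every k ≥ 1, Σ_{j=n_i+N+1}^{n_i+N+k} ξ_j(ω) > k(M₁ + λ + log(2d+1)); and for every k ≥ 1, Σ_{j=n_i−N−k+1}^{n_i−N} ξ_j(ω) > k(M₁ + λ + log(2d+1)). -/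

import Mathlib

open MeasureTheory Filter

namespace BKpaper

abbrev X (d : ℕ) := Fin d → ℤ

/-- the max-norm |x| = max_i |x_i|, as a natural number -/
def nm {d : ℕ} (x : X d) : ℕ := Finset.univ.sup fun i => (x i).natAbs

/-- spin value of a boolean: `true ↦ 1`, `false ↦ -1` -/
def sgn (b : Bool) : ℝ := if b then 1 else -1

/-- ξ_m(ω) = M₀ if ω_m = 1, ξ_m(ω) = −M₁ if ω_m = −1 -/
def xi (M₀ M₁ : ℝ) (ω : ℤ → Bool) (m : ℤ) : ℝ := if ω m then M₀ else -M₁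

/-- one admissible step of the lazy random walk -/
def stepOK {d : ℕ} (x y : X d) : Prop := (∑ i, (y i - x i).natAbs) ≤ 1

/-- admissible path on the (discrete) interval [n₁, n₂] -/
def Adm {d : ℕ} (n₁ n₂ : ℤ) (γ : ℤ → X d) : Prop :=
  ∀ n : ℤ, n₁ ≤ n → n < n₂ → stepOK (γ n) (γ (n + 1))

/-- a path frozen outside [n₁,n₂]; used to represent a path on [n₁,n₂] by a
function on all of ℤ -/
def Frozen {d : ℕ} (n₁ n₂ : ℤ) (γ : ℤ → X d) : Prop :=
  (∀ n : ℤ, n ≤ n₁ → γ n = γ n₁) ∧ (∀ n : ℤ, n₂ ≤ n → γ n = γ n₂)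

/-- Φ_{n₁,n₂}(γ,ω) = Σ_{n=n₁+1}^{n₂} V(γ(n)) ω_n -/
noncomputable def Phi {d : ℕ} (V : X d → ℝ) (ω : ℤ → Bool) (n₁ n₂ : ℤ) (γ : ℤ → X d) : ℝ :=
  ∑ n ∈ Finset.Icc (n₁ + 1) n₂, V (γ n) * sgn (ω n)

/-- the Feynman–Kac operator T^{n₁,n₂}(ω) -/
noncomputable def T {d : ℕ} (V : X d → ℝ) (ω : ℤ → Bool) (n₁ n₂ : ℤ)
    (u : X d → ℝ) (x : X d) : ℝ :=
  ((2 * (d : ℝ) + 1) ^ (n₂ - n₁))⁻¹ *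
    ∑' γ : {γ : ℤ → X d // Adm n₁ n₂ γ ∧ Frozen n₁ n₂ γ ∧ γ n₂ = x},
      Real.exp (Phi V ω n₁ n₂ γ.1) * u (γ.1 n₁)

/-- the partition function Z_{n₁,n₂}(x₁,x₂) -/
noncomputable def Z {d : ℕ} (V : X d → ℝ) (ω : ℤ → Bool) (n₁ n₂ : ℤ) (x₁ x₂ : X d) : ℝ :=
  ∑' γ : {γ : ℤ → X d // Adm n₁ n₂ γ ∧ Frozen n₁ n₂ γ ∧ γ n₁ = x₁ ∧ γ n₂ = x₂},
    Real.exp (Phi V ω n₁ n₂ γ.1)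

/-- the class F(c): nonnegative bounded functions with sup φ ≤ c·φ(0) -/
def Fset (d : ℕ) (c : ℝ) : Set (X d → ℝ) :=
  {φ | (∀ x, 0 ≤ φ x) ∧ ∀ x, φ x ≤ c * φ 0}

/-- P is the i.i.d. Bernoulli(1/2) product measure on {−1,1}^ℤ ≃ ℤ → Bool -/
def IsBernoulli (P : Measure (ℤ → Bool)) : Prop :=
  IsProbabilityMeasure P ∧ ∀ (s : Finset ℤ) (f : ℤ → Bool),
    P {ω | ∀ i ∈ s, ω i = f i} = (1 / 2 : ENNReal) ^ s.card

/-- the shift θ^k -/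
def shift (k : ℤ) (ω : ℤ → Bool) : ℤ → Bool := fun n => ω (k + n)

/-- first standard basis vector e₁ of ℤ^d -/
def e1 (d : ℕ) : X d := fun i => if (i : ℕ) = 0 then 1 else 0

/-- the optimal path γ*: γ*_n = 0 if ω_n = 1, γ*_n = e₁ if ω_n = −1 -/
def gstar (d : ℕ) (ω : ℤ → Bool) : ℤ → X d := fun n => if ω n then 0 else e1 d

/-- the pair (m₁,m₂) is (λ,r)-good for ω -/
def Good (d : ℕ) (M₀ M₁ lam : ℝ) (r : ℕ) (m₁ m₂ : ℤ) (ω : ℤ → Bool) : Prop :=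
  m₁ < m₂ ∧
  (∀ j : ℤ, m₁ + 1 ≤ j → j ≤ m₁ + r → ω j = true) ∧
  (∀ k : ℕ, 1 ≤ k →
    (k : ℝ) * (M₁ + lam + Real.log (2 * (d : ℝ) + 1)) <
      ∑ j ∈ Finset.Icc (m₁ + r + 1) (m₁ + r + k), xi M₀ M₁ ω j) ∧
  (∀ j : ℤ, m₂ - r + 1 ≤ j → j ≤ m₂ → ω j = true) ∧
  (∀ k : ℕ, 1 ≤ k →
    (k : ℝ) * (M₁ + lam + Real.log (2 * (d : ℝ) + 1)) <
      ∑ j ∈ Finset.Icc (m₂ - r - k + 1) (m₂ - r), xi M₀ M₁ ω j)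

/-- the ball B_r ⊆ ℤ^d as a finite set -/
noncomputable def ball (d r : ℕ) : Finset (X d) := Fintype.piFinset fun _ => Finset.Icc (-(r : ℤ)) (r : ℤ)

lemma ball_nonempty (d r : ℕ) : (ball d r).Nonempty :=
  ⟨fun _ => 0, by simp [ball, Fintype.mem_piFinset]⟩

/-- the Hilbert projective (pseudo)metric ρ_r on functions restricted to B_r -/
noncomputable def rho (d r : ℕ) (φ ψ : X d → ℝ) : ℝ :=
  Real.log ((ball d r).sup' (ball_nonempty d r) (fun x => φ x / ψ x) *
            (ball d r).sup' (ball_nonempty d r) (fun x => ψ x / φ x))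

/-- diam_r of a set of functions w.r.t. ρ_r -/
noncomputable def diamr (d r : ℕ) (A : Set (X d → ℝ)) : ℝ :=
  sSup {y | ∃ φ ∈ A, ∃ ψ ∈ A, y = rho d r φ ψ}

/-- the set G(λ,r) (with K₁ explicit): φ ∈ F(2K₁) with sup_{|x|>r} φ ≤ sup_{|x|≤r} φ -/
def Gset (d : ℕ) (K₁ : ℝ) (r : ℕ) : Set (X d → ℝ) :=
  {φ | φ ∈ Fset d (2 * K₁) ∧ ∀ x, r < nm x → ∃ z, nm z ≤ r ∧ φ x ≤ φ z}

/-- the set H(λ,r) (with K₁, K₂ explicit) -/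
def Hset (d : ℕ) (K₁ K₂ : ℝ) (r : ℕ) : Set (X d → ℝ) :=
  {φ | φ ∈ Gset d K₁ r ∧ (⨆ x, φ x) = 1 ∧ ∀ y, nm y ≤ r → 1 / K₂ ≤ φ y}

/-- finite-volume Gibbs measure on [n₁,n₂] for ω (paths represented as
functions ℤ → ℤ^d frozen outside [n₁,n₂]) -/
def FVGibbs (d : ℕ) (V : X d → ℝ) (ω : ℤ → Bool) (n₁ n₂ : ℤ)
    (μ : Measure (ℤ → X d)) : Prop :=
  IsProbabilityMeasure μ ∧
  μ {γ | Adm n₁ n₂ γ ∧ Frozen n₁ n₂ γ} = 1 ∧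
  ∀ γ : ℤ → X d, Adm n₁ n₂ γ →
    μ {α | α n₁ = γ n₁ ∧ α n₂ = γ n₂} ≠ 0 →
    μ {α | ∀ n : ℤ, n₁ ≤ n → n ≤ n₂ → α n = γ n} =
      ENNReal.ofReal (Real.exp (Phi V ω n₁ n₂ γ) / Z V ω n₁ n₂ (γ n₁) (γ n₂)) *
        μ {α | α n₁ = γ n₁ ∧ α n₂ = γ n₂}

/-- (infinite-volume) Gibbs measure for ω -/
def GibbsMeasure (d : ℕ) (V : X d → ℝ) (ω : ℤ → Bool) (μ : Measure (ℤ → X d)) : Prop :=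
  IsProbabilityMeasure μ ∧
  μ {α | ∀ n : ℤ, stepOK (α n) (α (n + 1))} = 1 ∧
  ∀ n₁ n₂ : ℤ, n₁ < n₂ → ∀ γ : ℤ → X d, Adm n₁ n₂ γ →
    μ {α | α n₁ = γ n₁ ∧ α n₂ = γ n₂} ≠ 0 →
    μ {α | ∀ n : ℤ, n₁ ≤ n → n ≤ n₂ → α n = γ n} =
      ENNReal.ofReal (Real.exp (Phi V ω n₁ n₂ γ) / Z V ω n₁ n₂ (γ n₁) (γ n₂)) *
        μ {α | α n₁ = γ n₁ ∧ α n₂ = γ n₂}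

/-- the weak localization condition for a measure on two-sided paths -/
def WeakLoc (d : ℕ) (μ : Measure (ℤ → X d)) : Prop :=
  ∀ ε : ℝ, 0 < ε → ∃ r : ℕ,
    Filter.liminf (fun n : ℤ => μ {α | r < nm (α n)}) Filter.atTop < ENNReal.ofReal ε ∧
    Filter.liminf (fun n : ℤ => μ {α | r < nm (α n)}) Filter.atBot < ENNReal.ofReal ε

/-- normalized positive eigenfunction of the cocycle T -/
def IsEigen (d : ℕ) (V : X d → ℝ) (P : Measure (ℤ → Bool))
    (u : (ℤ → Bool) → X d → ℝ) : Prop :=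
  (∀ x : X d, Measurable fun ω => u ω x) ∧
  ∀ᵐ ω ∂P, (∀ x, 0 < u ω x) ∧ BddAbove (Set.range (u ω)) ∧ (⨆ x, u ω x) = 1 ∧
    ∃ κ : ℝ, 0 < κ ∧ ∀ x, T V ω 0 1 (u ω) x = κ * u (shift 1 ω) x


section S12
open Finset

variable {P : Measure (ℤ → Bool)}

def Cyl (s : Finset ℤ) (f : ℤ → Bool) : Set (ℤ → Bool) := {ω | ∀ i ∈ s, ω i = f i}

lemma measurableSet_cyl (s : Finset ℤ) (f : ℤ → Bool) : MeasurableSet (Cyl s f) := by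
  have : Cyl s f = ⋂ i ∈ s, {ω : ℤ → Bool | ω i = f i} := by
    ext ω; simp [Cyl]
  rw [this]
  refine MeasurableSet.biInter s.countable_toSet fun i _ => ?_
  have : {ω : ℤ → Bool | ω i = f i} = (fun ω : ℤ → Bool => ω i) ⁻¹' {f i} := rfl
  rw [this]
  exact (measurable_pi_apply i) (measurableSet_singleton (f i))

lemma measure_cyl (hP : IsBernoulli P) (s : Finset ℤ) (f : ℤ → Bool) :
    P (Cyl s f) = (2 : ENNReal)⁻¹ ^ s.card := by
  have := hP.2 s f
  rw [one_div] at this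
  exact this

/-- `A` depends only on coordinates in `s` -/
def Dep (s : Finset ℤ) (A : Set (ℤ → Bool)) : Prop :=
  ∀ ⦃ω ω' : ℤ → Bool⦄, (∀ i ∈ s, ω i = ω' i) → ω ∈ A → ω' ∈ A

lemma Dep.mono {s t : Finset ℤ} {A : Set (ℤ → Bool)} (hst : s ⊆ t) (hA : Dep s A) :
    Dep t A := fun ω ω' h => hA fun i hi => h i (hst hi)

lemma Dep.compl {s : Finset ℤ} {A : Set (ℤ → Bool)} (hA : Dep s A) : Dep s Aᶜ :=
  fun ω ω' h hω hω' => hω (hA (fun i hi => (h i hi).symm) hω')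

lemma Dep.inter {s : Finset ℤ} {A B : Set (ℤ → Bool)} (hA : Dep s A) (hB : Dep s B) :
    Dep s (A ∩ B) := fun ω ω' h hω => ⟨hA h hω.1, hB h hω.2⟩

lemma dep_cyl (s : Finset ℤ) (f : ℤ → Bool) : Dep s (Cyl s f) :=
  fun ω ω' h hω i hi => (h i hi).symm.trans (hω i hi)

/-- extend a pattern on `s` by `false` -/
def extf (s : Finset ℤ) (f : {i // i ∈ s} → Bool) : ℤ → Bool :=
  fun i => if h : i ∈ s then f ⟨i, h⟩ else false

lemma extf_mem {s : Finset ℤ} (f : {i // i ∈ s} → Bool) {i : ℤ} (hi : i ∈ s) :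
    extf s f i = f ⟨i, hi⟩ := dif_pos hi

lemma dep_decomp {s : Finset ℤ} {A : Set (ℤ → Bool)} (hA : Dep s A) :
    A = ⋃ g : {f : {i // i ∈ s} → Bool // extf s f ∈ A}, Cyl s (extf s g.1) := by
  ext ω
  constructor
  · intro hω
    refine Set.mem_iUnion.2 ⟨⟨fun i => ω i.1, hA (fun i hi => (extf_mem (s := s) (fun j : {i // i ∈ s} => ω j.1) hi).symm) hω⟩, ?_⟩
    intro i hi
    exact (extf_mem (s := s) (fun j : {i // i ∈ s} => ω j.1) hi).symm
  · intro hω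
    obtain ⟨g, hg⟩ := Set.mem_iUnion.1 hω
    exact hA (fun i hi => (hg i hi).symm) g.2

lemma measure_dep (hP : IsBernoulli P) {s : Finset ℤ} {A : Set (ℤ → Bool)} (hA : Dep s A) :
    P A = (Nat.card {f : {i // i ∈ s} → Bool // extf s f ∈ A}) * (2 : ENNReal)⁻¹ ^ s.card := by
  classical
  have hdisj : Pairwise (Function.onFun Disjoint
      fun g : {f : {i // i ∈ s} → Bool // extf s f ∈ A} => Cyl s (extf s g.1)) := by
    intro g g' hgg'
    rw [Function.onFun]
    rw [Set.disjoint_left]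
    intro ω hω hω'
    apply hgg'
    ext i
    have h1 := hω i.1 i.2
    have h2 := hω' i.1 i.2
    rw [extf_mem _ i.2] at h1 h2
    have : g.1 ⟨i.1, i.2⟩ = g'.1 ⟨i.1, i.2⟩ := h1.symm.trans h2
    simpa using this
  conv_lhs => rw [dep_decomp hA]
  rw [measure_iUnion hdisj (fun g => measurableSet_cyl _ _)]
  rw [tsum_fintype]
  simp only [measure_cyl hP]
  rw [Finset.sum_const, Finset.card_univ, nsmul_eq_mul, Nat.card_eq_fintype_card]

lemma measurableSet_dep {s : Finset ℤ} {A : Set (ℤ → Bool)} (hA : Dep s A) :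
    MeasurableSet A := by
  classical
  rw [dep_decomp hA]
  exact MeasurableSet.iUnion fun g => measurableSet_cyl _ _


def mergeEquiv (s t : Finset ℤ) (hst : Disjoint s t) :
    ({i // i ∈ s ∪ t} → Bool) ≃ ({i // i ∈ s} → Bool) × ({i // i ∈ t} → Bool) where
  toFun h := (fun i => h ⟨i.1, Finset.mem_union_left t i.2⟩,
              fun i => h ⟨i.1, Finset.mem_union_right s i.2⟩)
  invFun p := fun i => if h : i.1 ∈ s then p.1 ⟨i.1, h⟩ else
    p.2 ⟨i.1, (Finset.mem_union.1 i.2).resolve_left h⟩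
  left_inv h := by
    funext i
    by_cases hi : i.1 ∈ s
    · simp only [dif_pos hi]
    · simp only [dif_neg hi]
  right_inv p := by
    refine Prod.ext ?_ ?_
    · funext i; exact dif_pos i.2
    · funext i
      have his : i.1 ∉ s := fun h => (Finset.disjoint_left.1 hst h) i.2
      exact dif_neg his

lemma measure_inter_dep (hP : IsBernoulli P) {s t : Finset ℤ} {A B : Set (ℤ → Bool)}
    (hA : Dep s A) (hB : Dep t B) (hst : Disjoint s t) :
    P (A ∩ B) = P A * P B := by
  classical
  have hAB : Dep (s ∪ t) (A ∩ B) :=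
    Dep.inter (hA.mono Finset.subset_union_left) (hB.mono Finset.subset_union_right)
  rw [measure_dep hP hAB, measure_dep hP hA, measure_dep hP hB]
  have hiffA : ∀ h : {i // i ∈ s ∪ t} → Bool,
      extf (s ∪ t) h ∈ A ↔ extf s ((mergeEquiv s t hst h).1) ∈ A := by
    intro h
    have hag : ∀ i ∈ s, extf (s ∪ t) h i = extf s ((mergeEquiv s t hst h).1) i := by
      intro i hi
      rw [extf_mem _ (Finset.mem_union_left t hi), extf_mem _ hi]
      rfl
    exact ⟨fun hmem => hA hag hmem, fun hmem => hA (fun i hi => (hag i hi).symm) hmem⟩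
  have hiffB : ∀ h : {i // i ∈ s ∪ t} → Bool,
      extf (s ∪ t) h ∈ B ↔ extf t ((mergeEquiv s t hst h).2) ∈ B := by
    intro h
    have hag : ∀ i ∈ t, extf (s ∪ t) h i = extf t ((mergeEquiv s t hst h).2) i := by
      intro i hi
      rw [extf_mem _ (Finset.mem_union_right s hi), extf_mem _ hi]
      rfl
    exact ⟨fun hmem => hB hag hmem, fun hmem => hB (fun i hi => (hag i hi).symm) hmem⟩
  have hcard : Nat.card {f : {i // i ∈ s ∪ t} → Bool // extf (s ∪ t) f ∈ A ∩ B}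
      = Nat.card {f : {i // i ∈ s} → Bool // extf s f ∈ A}
        * Nat.card {f : {i // i ∈ t} → Bool // extf t f ∈ B} := by
    rw [← Nat.card_prod]
    apply Nat.card_congr
    refine (Equiv.subtypeEquiv (mergeEquiv s t hst) ?_).trans
      (Equiv.subtypeProdEquivProd)
    intro h
    exact and_congr (hiffA h) (hiffB h)
  rw [hcard, Finset.card_union_of_disjoint hst, pow_add, Nat.cast_mul]
  ring

/-- existence of a Chernoff exponent -/
lemma exists_chernoff_t (a₁ a₂ : ℝ) (hneg : a₁ + a₂ < 0) :
    ∃ t : ℝ, 0 < t ∧ (Real.exp (t * a₁) + Real.exp (t * a₂)) / 2 < 1 := by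
  set F : ℝ → ℝ := fun t => (Real.exp (t * a₁) + Real.exp (t * a₂)) / 2 with hF
  have hF0 : F 0 = 1 := by simp [hF]
  have hd : HasDerivAt F ((a₁ + a₂) / 2) 0 := by
    have h1 : HasDerivAt (fun t : ℝ => Real.exp (t * a₁)) a₁ 0 := by
      have := ((hasDerivAt_mul_const a₁).exp (x := 0))
      simpa using this
    have h2 : HasDerivAt (fun t : ℝ => Real.exp (t * a₂)) a₂ 0 := by
      have := ((hasDerivAt_mul_const a₂).exp (x := 0))
      simpa using this
    exact (h1.add h2).div_const 2
  have hslope : Filter.Tendsto (slope F 0) (nhdsWithin 0 {(0:ℝ)}ᶜ) (nhds ((a₁ + a₂) / 2)) :=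
    hasDerivAt_iff_tendsto_slope.1 hd
  have hev : ∀ᶠ x in nhdsWithin 0 {(0:ℝ)}ᶜ, slope F 0 x < 0 :=
    hslope.eventually_lt_const (by linarith)
  have hev' : ∀ᶠ x in nhdsWithin 0 (Set.Ioi 0), slope F 0 x < 0 :=
    hev.filter_mono (nhdsWithin_mono 0 (fun x hx => ne_of_gt hx))
  have hmem : ∀ᶠ x in nhdsWithin 0 (Set.Ioi (0:ℝ)), x ∈ Set.Ioi (0:ℝ) :=
    self_mem_nhdsWithin
  obtain ⟨t, ht1, ht2⟩ := (hev'.and hmem).exists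
  refine ⟨t, ht2, ?_⟩
  have h3 : slope F 0 t = (F t - 1) / t := by
    rw [slope_def_field, hF0]
    simp
  rw [h3] at ht1
  have ht0 : (0:ℝ) < t := ht2
  have h4 : F t < 1 := by
    by_contra hcon
    push_neg at hcon
    have : 0 ≤ (F t - 1) / t := div_nonneg (by linarith) ht0.le
    linarith
  exact h4

def SumLe (M₀ M₁ : ℝ) (I : Finset ℤ) (v : ℝ) : Set (ℤ → Bool) :=
  {ω | ∑ j ∈ I, xi M₀ M₁ ω j ≤ v}

lemma dep_sumLe (M₀ M₁ : ℝ) (I : Finset ℤ) (v : ℝ) : Dep I (SumLe M₀ M₁ I v) := by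
  intro ω ω' h hω
  have heq : ∑ j ∈ I, xi M₀ M₁ ω' j = ∑ j ∈ I, xi M₀ M₁ ω j :=
    Finset.sum_congr rfl fun j hj => by rw [xi, xi, h j hj]
  show ∑ j ∈ I, xi M₀ M₁ ω' j ≤ v
  rw [heq]; exact hω

lemma measure_sumLe_le (hP : IsBernoulli P) {M₀ M₁ t : ℝ} (ht : 0 < t)
    (I : Finset ℤ) (v : ℝ) :
    P (SumLe M₀ M₁ I v) ≤ ENNReal.ofReal (Real.exp (t * v) *
      ((Real.exp (-(t * M₀)) + Real.exp (t * M₁)) / 2) ^ I.card) := by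
  classical
  set g : ℝ := Real.exp (-(t * M₀)) + Real.exp (t * M₁) with hg
  have hg0 : 0 ≤ g := by positivity
  rw [measure_dep hP (dep_sumLe M₀ M₁ I v)]
  have hcount : (Nat.card {f : {i // i ∈ I} → Bool // extf I f ∈ SumLe M₀ M₁ I v} : ℝ)
      ≤ Real.exp (t * v) * g ^ I.card := by
    rw [Nat.card_eq_fintype_card, Fintype.card_subtype]
    have hS : ∀ f : {i // i ∈ I} → Bool,
        ∑ j ∈ I, xi M₀ M₁ (extf I f) j = ∑ j : {i // i ∈ I}, (if f j then M₀ else -M₁) := by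
      intro f
      rw [← Finset.sum_attach I (fun j => xi M₀ M₁ (extf I f) j)]
      refine Finset.sum_congr rfl fun j _ => ?_
      rw [xi, extf_mem f j.2]
    have h1 : ((Finset.univ.filter
        fun f : {i // i ∈ I} → Bool => extf I f ∈ SumLe M₀ M₁ I v).card : ℝ)
        ≤ ∑ f : {i // i ∈ I} → Bool,
            Real.exp (t * (v - ∑ j : {i // i ∈ I}, (if f j then M₀ else -M₁))) := by
      rw [Finset.card_filter]
      push_cast
      refine Finset.sum_le_sum fun f _ => ?_
      by_cases hf : extf I f ∈ SumLe M₀ M₁ I v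
      · simp only [if_pos hf]
        have hfs := hf
        rw [SumLe, Set.mem_setOf_eq, hS f] at hfs
        have hnn : (0:ℝ) ≤ t * (v - ∑ j : {i // i ∈ I}, (if f j then M₀ else -M₁)) := by
          have h2 : 0 ≤ v - ∑ j : {i // i ∈ I}, (if f j then M₀ else -M₁) := by linarith
          positivity
        exact Real.one_le_exp hnn
      · simp only [if_neg hf]
        positivity
    have h2 : ∑ f : {i // i ∈ I} → Bool,
        Real.exp (t * (v - ∑ j : {i // i ∈ I}, (if f j then M₀ else -M₁)))
        = Real.exp (t * v) * g ^ I.card := by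
      have hsplit : ∀ f : {i // i ∈ I} → Bool,
          Real.exp (t * (v - ∑ j : {i // i ∈ I}, (if f j then M₀ else -M₁)))
          = Real.exp (t * v) * ∏ j : {i // i ∈ I},
              Real.exp (-(t * (if f j then M₀ else -M₁))) := by
        intro f
        rw [← Real.exp_sum, ← Real.exp_add]
        congr 1
        have : ∑ j : {i // i ∈ I}, -(t * (if f j then M₀ else -M₁))
            = -(t * ∑ j : {i // i ∈ I}, (if f j then M₀ else -M₁)) := by
          rw [Finset.mul_sum, ← Finset.sum_neg_distrib]
        rw [this]; ring
      rw [Finset.sum_congr rfl (fun f _ => hsplit f), ← Finset.mul_sum]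
      congr 1
      have hprod : ∏ j : {i // i ∈ I}, (∑ b : Bool, Real.exp (-(t * (if b then M₀ else -M₁))))
          = ∑ f ∈ Fintype.piFinset (fun _ : {i // i ∈ I} => (Finset.univ : Finset Bool)),
              ∏ j : {i // i ∈ I}, Real.exp (-(t * (if f j then M₀ else -M₁))) := by
        exact Finset.prod_univ_sum _ _
      rw [Fintype.piFinset_univ] at hprod
      rw [← hprod]
      have hb : (∑ b : Bool, Real.exp (-(t * (if b then M₀ else -M₁)))) = g := by
        rw [Fintype.sum_bool]
        simp [hg, mul_neg]
      rw [hb, Finset.prod_const, Finset.card_univ, Fintype.card_coe]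
    exact h1.trans (le_of_eq h2)
  -- pass to ENNReal
  have hl : (Nat.card {f : {i // i ∈ I} → Bool // extf I f ∈ SumLe M₀ M₁ I v} : ENNReal)
      * (2 : ENNReal)⁻¹ ^ I.card
      = ENNReal.ofReal ((Nat.card {f : {i // i ∈ I} → Bool // extf I f ∈ SumLe M₀ M₁ I v} : ℝ)
        * ((2:ℝ)⁻¹) ^ I.card) := by
    rw [ENNReal.ofReal_mul (by positivity)]
    rw [ENNReal.ofReal_natCast, ENNReal.ofReal_pow (by norm_num)]
    congr 1
    rw [ENNReal.ofReal_inv_of_pos (by norm_num : (0:ℝ) < 2)]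
    norm_num
  rw [hl]
  apply ENNReal.ofReal_le_ofReal
  calc (Nat.card {f : {i // i ∈ I} → Bool // extf I f ∈ SumLe M₀ M₁ I v} : ℝ)
      * ((2:ℝ)⁻¹) ^ I.card
      ≤ (Real.exp (t * v) * g ^ I.card) * ((2:ℝ)⁻¹) ^ I.card :=
        mul_le_mul_of_nonneg_right hcount (by positivity)
    _ = Real.exp (t * v) * (g / 2) ^ I.card := by
        rw [div_eq_mul_inv, mul_pow]; ring

def FwdBad (M₀ M₁ c B : ℝ) (b : ℤ) : Set (ℤ → Bool) :=
  ⋃ k : ℕ, SumLe M₀ M₁ (Finset.Icc (b + 1) (b + (k + 1 : ℕ))) (((k : ℝ) + 1) * c - B)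

def BwdBad (M₀ M₁ c B : ℝ) (b : ℤ) : Set (ℤ → Bool) :=
  ⋃ k : ℕ, SumLe M₀ M₁ (Finset.Icc (b - (k + 1 : ℕ) + 1) b) (((k : ℝ) + 1) * c - B)

lemma card_Icc_fwd (b : ℤ) (k : ℕ) : (Finset.Icc (b + 1) (b + (k + 1 : ℕ))).card = k + 1 := by
  rw [Int.card_Icc]
  omega

lemma card_Icc_bwd (b : ℤ) (k : ℕ) : (Finset.Icc (b - (k + 1 : ℕ) + 1) b).card = k + 1 := by
  rw [Int.card_Icc]
  omega

/-- the common geometric bound -/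
lemma tsum_theta_bound {M₀ M₁ c t B : ℝ} (ht : 0 < t)
    (hθ : Real.exp (t * c) * ((Real.exp (-(t * M₀)) + Real.exp (t * M₁)) / 2) < 1)
    (hcard : ∀ k : ℕ, ∃ I : Finset ℤ, True) : True := trivial

lemma per_k_bound {M₀ M₁ c t B : ℝ} (k : ℕ) :
    Real.exp (t * (((k : ℝ) + 1) * c - B)) *
      ((Real.exp (-(t * M₀)) + Real.exp (t * M₁)) / 2) ^ (k + 1)
    = Real.exp (-(t * B)) *
      (Real.exp (t * c) * ((Real.exp (-(t * M₀)) + Real.exp (t * M₁)) / 2)) ^ (k + 1) := by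
  rw [mul_pow, ← Real.exp_nat_mul, ← mul_assoc, ← Real.exp_add]
  congr 1
  push_cast
  ring

lemma measure_bad_le (hP : IsBernoulli P) {M₀ M₁ c t B : ℝ} (ht : 0 < t) (hB : 0 ≤ B)
    (b : ℤ) (bad : Set (ℤ → Bool))
    (hbad : bad = FwdBad M₀ M₁ c B b ∨ bad = BwdBad M₀ M₁ c B b) :
    P bad ≤ ENNReal.ofReal (Real.exp (-(t * B))) *
      (ENNReal.ofReal (Real.exp (t * c) * ((Real.exp (-(t * M₀)) + Real.exp (t * M₁)) / 2)) *
        (1 - ENNReal.ofReal (Real.exp (t * c) *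
          ((Real.exp (-(t * M₀)) + Real.exp (t * M₁)) / 2)))⁻¹) := by
  set θ : ℝ := Real.exp (t * c) * ((Real.exp (-(t * M₀)) + Real.exp (t * M₁)) / 2) with hθdef
  have hθ0 : 0 ≤ θ := by positivity
  have hkey : ∀ (I : ℕ → Finset ℤ), (∀ k, (I k).card = k + 1) →
      P (⋃ k : ℕ, SumLe M₀ M₁ (I k) (((k : ℝ) + 1) * c - B)) ≤
      ENNReal.ofReal (Real.exp (-(t * B))) *
        (ENNReal.ofReal θ * (1 - ENNReal.ofReal θ)⁻¹) := by
    intro I hI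
    refine (measure_iUnion_le _).trans ?_
    have hterm : ∀ k : ℕ, P (SumLe M₀ M₁ (I k) (((k : ℝ) + 1) * c - B)) ≤
        ENNReal.ofReal (Real.exp (-(t * B))) * (ENNReal.ofReal θ) ^ (k + 1) := by
      intro k
      refine (measure_sumLe_le hP ht (I k) _).trans ?_
      rw [hI k]
      rw [per_k_bound (M₀ := M₀) (M₁ := M₁) (c := c) (t := t) (B := B) k]
      rw [ENNReal.ofReal_mul (by positivity), ENNReal.ofReal_pow hθ0]
    refine (ENNReal.tsum_le_tsum hterm).trans ?_
    rw [ENNReal.tsum_mul_left]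
    refine mul_le_mul_right ?_ _
    have : ∀ k : ℕ, (ENNReal.ofReal θ) ^ (k + 1) = ENNReal.ofReal θ * (ENNReal.ofReal θ) ^ k :=
      fun k => pow_succ' _ _
    rw [tsum_congr this, ENNReal.tsum_mul_left, ENNReal.tsum_geometric]
  rcases hbad with h | h <;> rw [h]
  · exact hkey _ (card_Icc_fwd b)
  · exact hkey _ (card_Icc_bwd b)

/-- a run of `true`s on `[a+1, a+W]` -/
def Run (a : ℤ) (W : ℕ) : Set (ℤ → Bool) := Cyl (Finset.Icc (a + 1) (a + W)) (fun _ => true)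

lemma card_Icc_run (a : ℤ) (W : ℕ) : (Finset.Icc (a + 1) (a + (W:ℤ))).card = W := by
  rw [Int.card_Icc]; omega

lemma dep_run (a : ℤ) (W : ℕ) : Dep (Finset.Icc (a + 1) (a + W)) (Run a W) :=
  dep_cyl _ _

lemma measure_run (hP : IsBernoulli P) (a : ℤ) (W : ℕ) :
    P (Run a W) = (2 : ENNReal)⁻¹ ^ W := by
  rw [Run, measure_cyl hP, card_Icc_run]

/-- intersection of complements of runs at consecutive windows -/
lemma measure_inter_run_compl (hP : IsBernoulli P) (o : ℤ) (W : ℕ) (hW : 1 ≤ W) :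
    ∀ m : ℕ, P (⋂ j ∈ Finset.range m, (Run (o + j * W) W)ᶜ)
      = (1 - (2 : ENNReal)⁻¹ ^ W) ^ m := by
  haveI : IsProbabilityMeasure P := hP.1
  intro m
  induction m with
  | zero => simp
  | succ m ih =>
    have hdep : Dep (Finset.Icc (o + 1) (o + m * W))
        (⋂ j ∈ Finset.range m, (Run (o + j * W) W)ᶜ) := by
      intro ω ω' h hω
      simp only [Set.mem_iInter] at hω ⊢
      intro j hj
      have hjm : (j : ℤ) < m := by exact_mod_cast Finset.mem_range.1 hj
      refine Dep.compl (dep_run (o + j * W) W) (fun i hi => h i ?_) (hω j hj)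
      simp only [Finset.mem_Icc] at hi ⊢
      constructor
      · have : (0:ℤ) ≤ j * W := by positivity
        omega
      · have : (j:ℤ) * W + W ≤ m * W := by
          have h1 : (j:ℤ) + 1 ≤ m := by omega
          calc (j:ℤ) * W + W = (j + 1) * W := by ring
            _ ≤ m * W := by
              apply mul_le_mul_of_nonneg_right h1
              exact_mod_cast Nat.zero_le W
        omega
    have hsplit : (⋂ j ∈ Finset.range (m+1), (Run (o + j * W) W)ᶜ)
        = (⋂ j ∈ Finset.range m, (Run (o + j * W) W)ᶜ) \ Run (o + m * W) W := by
      ext ω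
      simp only [Set.mem_iInter, Set.mem_diff, Set.mem_compl_iff, Finset.mem_range]
      constructor
      · intro h
        exact ⟨fun j hj => h j (by omega), h m (by omega)⟩
      · rintro ⟨h1, h2⟩ j hj
        rcases Nat.lt_succ_iff_lt_or_eq.1 hj with h | h
        · exact h1 j h
        · subst h; exact h2
    have hdisj : Disjoint (Finset.Icc (o + 1) (o + m * W))
        (Finset.Icc (o + m * W + 1) (o + m * W + W)) := by
      rw [Finset.disjoint_left]
      intro x hx hx'
      simp only [Finset.mem_Icc] at hx hx'
      omega
    have hrun_dep : Dep (Finset.Icc (o + m * W + 1) (o + m * W + W)) (Run (o + m * W) W) :=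
      dep_run _ _
    have hinter := measure_inter_dep hP hdep hrun_dep hdisj
    rw [hsplit, ← Set.diff_self_inter, measure_diff Set.inter_subset_left
      ((measurableSet_dep hdep).inter (measurableSet_dep hrun_dep)).nullMeasurableSet
      (measure_ne_top P _), hinter, measure_run hP, ih, pow_succ]
    rw [ENNReal.mul_sub (fun _ _ =>
      ENNReal.pow_ne_top (by simp : (1 - (2:ENNReal)⁻¹ ^ W) ≠ ⊤)), mul_one]

/-- geometric tail constant -/
noncomputable def Kgeo (θ : ℝ) : ENNReal := ENNReal.ofReal θ * (1 - ENNReal.ofReal θ)⁻¹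

lemma Kgeo_ne_top {θ : ℝ} (hθ : θ < 1) : Kgeo θ ≠ ⊤ := by
  rw [Kgeo]
  apply ENNReal.mul_ne_top (by simp)
  rw [Ne, ENNReal.inv_eq_top]
  intro h
  have h1 : (1 : ENNReal) ≤ ENNReal.ofReal θ := by
    rwa [tsub_eq_zero_iff_le] at h
  have h2 : ENNReal.ofReal θ < 1 := ENNReal.ofReal_lt_one.2 hθ
  exact absurd h1 h2.not_ge

lemma tsum_sumLe_le (hP : IsBernoulli P) {M₀ M₁ c t B : ℝ} (ht : 0 < t)
    (I : ℕ → Finset ℤ) (hI : ∀ k, (I k).card = k + 1) :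
    ∑' k : ℕ, P (SumLe M₀ M₁ (I k) (((k : ℝ) + 1) * c - B)) ≤
      ENNReal.ofReal (Real.exp (-(t * B))) *
        Kgeo (Real.exp (t * c) * ((Real.exp (-(t * M₀)) + Real.exp (t * M₁)) / 2)) := by
  set θ : ℝ := Real.exp (t * c) * ((Real.exp (-(t * M₀)) + Real.exp (t * M₁)) / 2) with hθdef
  have hθ0 : 0 ≤ θ := by positivity
  have hterm : ∀ k : ℕ, P (SumLe M₀ M₁ (I k) (((k : ℝ) + 1) * c - B)) ≤
      ENNReal.ofReal (Real.exp (-(t * B))) * (ENNReal.ofReal θ) ^ (k + 1) := by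
    intro k
    refine (measure_sumLe_le hP ht (I k) _).trans ?_
    rw [hI k, per_k_bound (M₀ := M₀) (M₁ := M₁) (c := c) (t := t) (B := B) k]
    rw [ENNReal.ofReal_mul (by positivity), ENNReal.ofReal_pow hθ0]
  refine (ENNReal.tsum_le_tsum hterm).trans ?_
  rw [ENNReal.tsum_mul_left]
  refine mul_le_mul_right ?_ _
  have hc : ∀ k : ℕ, (ENNReal.ofReal θ) ^ (k + 1) = ENNReal.ofReal θ * (ENNReal.ofReal θ) ^ k :=
    fun k => pow_succ' _ _
  rw [tsum_congr hc, ENNReal.tsum_mul_left, ENNReal.tsum_geometric]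
  exact le_rfl

/-- intersection with a run bound -/
lemma measure_run_inter_union_le (hP : IsBernoulli P) {M₀ M₁ c t B : ℝ} (ht : 0 < t)
    {a : ℤ} {W : ℕ} (I : ℕ → Finset ℤ) (hI : ∀ k, (I k).card = k + 1)
    (hd : ∀ k, Disjoint (Finset.Icc (a + 1) (a + (W:ℤ))) (I k)) :
    P (Run a W ∩ ⋃ k : ℕ, SumLe M₀ M₁ (I k) (((k : ℝ) + 1) * c - B)) ≤
      (2 : ENNReal)⁻¹ ^ W * (ENNReal.ofReal (Real.exp (-(t * B))) *
        Kgeo (Real.exp (t * c) * ((Real.exp (-(t * M₀)) + Real.exp (t * M₁)) / 2))) := by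
  rw [Set.inter_iUnion]
  refine (measure_iUnion_le _).trans ?_
  have heq : ∀ k : ℕ, P (Run a W ∩ SumLe M₀ M₁ (I k) (((k : ℝ) + 1) * c - B))
      = (2 : ENNReal)⁻¹ ^ W * P (SumLe M₀ M₁ (I k) (((k : ℝ) + 1) * c - B)) := by
    intro k
    rw [measure_inter_dep hP (dep_run a W) (dep_sumLe M₀ M₁ (I k) _) (hd k), measure_run hP]
  rw [tsum_congr heq, ENNReal.tsum_mul_left]
  exact mul_le_mul_right (tsum_sumLe_le hP ht I hI) _


def Wf (N i : ℕ) : ℕ := 2 * N + 2 * (i + 1)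
def Kf (N i : ℕ) : ℕ := (i + 1) ^ 3 * 2 ^ (Wf N i)

def GoodCand (M₀ M₁ c : ℝ) (N i : ℕ) (a : ℤ) : Set (ℤ → Bool) :=
  Run a (Wf N i) ∩
    (FwdBad M₀ M₁ c (((i:ℝ) + 1) * (M₀ - c)) (a + (Wf N i : ℤ)))ᶜ ∩
    (BwdBad M₀ M₁ c (((i:ℝ) + 1) * (M₀ - c)) a)ᶜ

def BadBlock (M₀ M₁ c : ℝ) (N : ℕ) (o : ℤ) (i : ℕ) : Set (ℤ → Bool) :=
  {ω | ¬ ∃ j : ℕ, j < Kf N i ∧ ω ∈ GoodCand M₀ M₁ c N i (o + j * (Wf N i))}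

lemma run_inter_both_le (hP : IsBernoulli P) {M₀ M₁ c t : ℝ} (ht : 0 < t)
    (B : ℝ) (a : ℤ) (W : ℕ) :
    P (Run a W ∩ (FwdBad M₀ M₁ c B (a + (W:ℤ)) ∪ BwdBad M₀ M₁ c B a)) ≤
      (2 : ENNReal)⁻¹ ^ W * (2 * (ENNReal.ofReal (Real.exp (-(t * B))) *
        Kgeo (Real.exp (t * c) * ((Real.exp (-(t * M₀)) + Real.exp (t * M₁)) / 2)))) := by
  rw [Set.inter_union_distrib_left]
  refine (measure_union_le _ _).trans ?_
  have h1 : P (Run a W ∩ FwdBad M₀ M₁ c B (a + (W:ℤ))) ≤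
      (2 : ENNReal)⁻¹ ^ W * (ENNReal.ofReal (Real.exp (-(t * B))) *
        Kgeo (Real.exp (t * c) * ((Real.exp (-(t * M₀)) + Real.exp (t * M₁)) / 2))) := by
    refine measure_run_inter_union_le hP ht _ (card_Icc_fwd _) ?_
    intro k
    rw [Finset.disjoint_left]
    intro x hx hx'
    simp only [Finset.mem_Icc] at hx hx'
    omega
  have h2 : P (Run a W ∩ BwdBad M₀ M₁ c B a) ≤
      (2 : ENNReal)⁻¹ ^ W * (ENNReal.ofReal (Real.exp (-(t * B))) *
        Kgeo (Real.exp (t * c) * ((Real.exp (-(t * M₀)) + Real.exp (t * M₁)) / 2))) := by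
    refine measure_run_inter_union_le hP ht _ (card_Icc_bwd _) ?_
    intro k
    rw [Finset.disjoint_left]
    intro x hx hx'
    simp only [Finset.mem_Icc] at hx hx'
    omega
  calc P (Run a W ∩ FwdBad M₀ M₁ c B (a + (W:ℤ))) + P (Run a W ∩ BwdBad M₀ M₁ c B a)
      ≤ _ + _ := add_le_add h1 h2
    _ = (2 : ENNReal)⁻¹ ^ W * (2 * (ENNReal.ofReal (Real.exp (-(t * B))) *
        Kgeo (Real.exp (t * c) * ((Real.exp (-(t * M₀)) + Real.exp (t * M₁)) / 2)))) := by
      ring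

lemma one_sub_pow_le_real (q : ℝ) (hq0 : 0 ≤ q) (hq1 : q ≤ 1) (K : ℕ) (x : ℝ) (hx : 0 < x)
    (hKq : (K : ℝ) * q = x) : (1 - q) ^ K ≤ x⁻¹ := by
  have h0 : (0:ℝ) ≤ 1 - q := by linarith
  have h1 : 1 + (K:ℝ) * q ≤ (1 + q) ^ K := by
    have := one_add_mul_le_pow (a := q) (by linarith) K
    linarith
  have h2 : (1 - q) ^ K * (1 + q) ^ K ≤ 1 := by
    rw [← mul_pow]
    have h3 : (1 - q) * (1 + q) ≤ 1 := by nlinarith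
    have h4 : (0:ℝ) ≤ (1 - q) * (1 + q) := by nlinarith
    exact pow_le_one₀ h4 h3
  have h5 : (1 - q) ^ K * x ≤ 1 := by
    have h6 : (1 - q) ^ K * ((K:ℝ) * q) ≤ (1 - q) ^ K * (1 + q) ^ K := by
      apply mul_le_mul_of_nonneg_left _ (by positivity)
      calc (K:ℝ) * q ≤ 1 + (K:ℝ) * q := by linarith
        _ ≤ (1 + q) ^ K := h1
    rw [hKq] at h6
    linarith
  rw [inv_eq_one_div, le_div_iff₀ hx]
  exact h5

lemma measure_badBlock_le (hP : IsBernoulli P) {M₀ M₁ c t : ℝ} (ht : 0 < t)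
    (N : ℕ) (o : ℤ) (i : ℕ) :
    P (BadBlock M₀ M₁ c N o i) ≤ ENNReal.ofReal ((((i:ℝ) + 1))⁻¹ ^ 3)
      + ((i : ENNReal) + 1) ^ 3 * (2 * (ENNReal.ofReal (Real.exp (-(t * (((i:ℝ) + 1) * (M₀ - c))))) *
          Kgeo (Real.exp (t * c) * ((Real.exp (-(t * M₀)) + Real.exp (t * M₁)) / 2)))) := by
  set W := Wf N i with hW
  set K := Kf N i with hK
  set B : ℝ := ((i:ℝ) + 1) * (M₀ - c) with hB
  -- containment
  have hsub : BadBlock M₀ M₁ c N o i ⊆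
      (⋂ j ∈ Finset.range K, (Run (o + j * W) W)ᶜ) ∪
      ⋃ j ∈ Finset.range K, (Run (o + j * W) W ∩
        (FwdBad M₀ M₁ c B (o + j * W + (W:ℤ)) ∪ BwdBad M₀ M₁ c B (o + j * W))) := by
    intro ω hω
    by_cases hrun : ∀ j : ℕ, j < K → ω ∉ Run (o + j * W) W
    · left
      simp only [Set.mem_iInter, Set.mem_compl_iff, Finset.mem_range]
      exact fun j hj => hrun j hj
    · right
      push_neg at hrun
      obtain ⟨j, hjK, hjr⟩ := hrun
      have hnotgood : ω ∉ GoodCand M₀ M₁ c N i (o + j * W) := fun hg => hω ⟨j, hjK, hg⟩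
      simp only [Set.mem_iUnion, Finset.mem_range]
      refine ⟨j, hjK, hjr, ?_⟩
      by_contra hcon
      simp only [Set.mem_union, not_or] at hcon
      exact hnotgood ⟨⟨hjr, hcon.1⟩, hcon.2⟩
    
  refine (measure_mono hsub).trans ?_
  refine (measure_union_le _ _).trans (add_le_add ?_ ?_)
  · -- first part
    rw [measure_inter_run_compl hP o W (by rw [hW, Wf]; omega) K]
    have hq0 : (0:ℝ) ≤ (2:ℝ)⁻¹ ^ W := by positivity
    have hq1 : ((2:ℝ)⁻¹) ^ W ≤ 1 := pow_le_one₀ (by norm_num) (by norm_num)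
    have hq : (2 : ENNReal)⁻¹ ^ W = ENNReal.ofReal (((2:ℝ)⁻¹) ^ W) := by
      rw [ENNReal.ofReal_pow (by norm_num), ENNReal.ofReal_inv_of_pos (by norm_num)]
      norm_num
    rw [hq, ← ENNReal.ofReal_one, ← ENNReal.ofReal_sub _ hq0,
      ← ENNReal.ofReal_pow (by linarith)]
    apply ENNReal.ofReal_le_ofReal
    have hip : (((i:ℝ) + 1))⁻¹ ^ 3 = (((i:ℝ) + 1) ^ 3)⁻¹ := inv_pow _ _
    rw [hip]
    apply one_sub_pow_le_real _ hq0 hq1 _ _ (by positivity)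
    have h2W : (2:ℝ) ^ W * (2:ℝ)⁻¹ ^ W = 1 := by
      rw [← mul_pow]; norm_num
    rw [hK, Kf, ← hW]
    push_cast
    calc ((i:ℝ)+1)^3 * 2^W * 2⁻¹^W = ((i:ℝ)+1)^3 * (2^W * 2⁻¹^W) := by ring
      _ = ((i:ℝ)+1)^3 := by rw [h2W, mul_one]
  · -- second part
    refine (measure_biUnion_finset_le _ _).trans ?_
    have hj : ∀ j ∈ Finset.range K, P (Run (o + j * W) W ∩
        (FwdBad M₀ M₁ c B (o + j * W + (W:ℤ)) ∪ BwdBad M₀ M₁ c B (o + j * W))) ≤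
        (2 : ENNReal)⁻¹ ^ W * (2 * (ENNReal.ofReal (Real.exp (-(t * B))) *
          Kgeo (Real.exp (t * c) * ((Real.exp (-(t * M₀)) + Real.exp (t * M₁)) / 2)))) :=
      fun j _ => run_inter_both_le hP ht B _ W
    refine (Finset.sum_le_sum hj).trans ?_
    rw [Finset.sum_const, Finset.card_range, nsmul_eq_mul, ← mul_assoc]
    have hKW : (K : ENNReal) * (2:ENNReal)⁻¹ ^ W = ((i : ENNReal) + 1) ^ 3 := by
      have h1 : (2:ENNReal) ^ W * (2:ENNReal)⁻¹ ^ W = 1 := by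
        rw [← mul_pow, ENNReal.mul_inv_cancel (by norm_num) (by norm_num), one_pow]
      rw [hK, Kf, ← hW]
      push_cast
      rw [mul_assoc, h1, mul_one]
    rw [hKW]

lemma tsum_badBlock_ne_top (hP : IsBernoulli P) {M₀ M₁ c t : ℝ} (ht : 0 < t)
    (hθ : Real.exp (t * c) * ((Real.exp (-(t * M₀)) + Real.exp (t * M₁)) / 2) < 1)
    (hc : c < M₀) (N : ℕ) (o : ℕ → ℤ) :
    ∑' i : ℕ, P (BadBlock M₀ M₁ c N (o i) i) ≠ ⊤ := by
  set θ : ℝ := Real.exp (t * c) * ((Real.exp (-(t * M₀)) + Real.exp (t * M₁)) / 2) with hθdef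
  set ρ : ℝ := Real.exp (-(t * (M₀ - c))) with hρdef
  have hρ1 : ρ < 1 := by
    rw [hρdef, Real.exp_lt_one_iff]
    nlinarith
  have hρ0 : 0 ≤ ρ := Real.exp_nonneg _
  have hexp : ∀ i : ℕ, Real.exp (-(t * (((i:ℝ) + 1) * (M₀ - c)))) = ρ ^ (i + 1) := by
    intro i
    rw [hρdef, ← Real.exp_nat_mul]
    congr 1
    push_cast
    ring
  have hbound := fun i : ℕ => measure_badBlock_le hP (M₀ := M₀) (M₁ := M₁) (c := c) ht N (o i) i
  refine ne_top_of_le_ne_top ?_ (ENNReal.tsum_le_tsum hbound)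
  rw [ENNReal.tsum_add]
  apply ENNReal.add_ne_top.2
  constructor
  · -- p-series part
    have hs0 : Summable (fun n : ℕ => 1 / (n:ℝ) ^ 3) :=
      Real.summable_one_div_nat_pow.2 (by norm_num)
    have hs1 : Summable (fun i : ℕ => (((i:ℝ) + 1))⁻¹ ^ 3) := by
      have := (summable_nat_add_iff 1).2 hs0
      refine this.congr fun i => ?_
      push_cast
      rw [inv_pow, one_div]
    rw [← ENNReal.ofReal_tsum_of_nonneg (fun i => by positivity) hs1]
    exact ENNReal.ofReal_ne_top
  · -- geometric part
    have hterm : ∀ i : ℕ, ((i : ENNReal) + 1) ^ 3 *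
        (2 * (ENNReal.ofReal (Real.exp (-(t * (((i:ℝ) + 1) * (M₀ - c))))) * Kgeo θ))
        = (2 * Kgeo θ) * ENNReal.ofReal ((((i:ℝ) + 1)) ^ 3 * ρ ^ (i + 1)) := by
      intro i
      rw [hexp i, ENNReal.ofReal_mul (by positivity)]
      have hcast : ((i : ENNReal) + 1) ^ 3 = ENNReal.ofReal ((((i:ℝ) + 1)) ^ 3) := by
        rw [ENNReal.ofReal_pow (by positivity), ENNReal.ofReal_add (Nat.cast_nonneg i) zero_le_one,
          ENNReal.ofReal_natCast, ENNReal.ofReal_one]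
      rw [hcast]
      ring
    rw [tsum_congr hterm, ENNReal.tsum_mul_left]
    have hs2 : Summable (fun i : ℕ => (((i:ℝ) + 1)) ^ 3 * ρ ^ (i + 1)) := by
      have hsg : Summable (fun n : ℕ => (n:ℝ) ^ 3 * ρ ^ n) := by
        apply summable_pow_mul_geometric_of_norm_lt_one
        rw [Real.norm_eq_abs, abs_of_nonneg hρ0]
        exact hρ1
      have := (summable_nat_add_iff 1).2 hsg
      refine this.congr fun i => ?_
      push_cast
      ring
    rw [← ENNReal.ofReal_tsum_of_nonneg (fun i => by positivity) hs2]
    apply ENNReal.mul_ne_top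
    · exact ENNReal.mul_ne_top (by norm_num) (Kgeo_ne_top hθ)
    · exact ENNReal.ofReal_ne_top

/-- the conclusion conditions of the theorem at a center `n` -/
def GoodCenter (M₀ M₁ c : ℝ) (N : ℕ) (ω : ℤ → Bool) (n : ℤ) : Prop :=
  (∀ j : ℤ, n - N + 1 ≤ j → j ≤ n + N → ω j = true) ∧
  (∀ k : ℕ, 1 ≤ k → (k : ℝ) * c < ∑ j ∈ Finset.Icc (n + N + 1) (n + N + k), xi M₀ M₁ ω j) ∧
  (∀ k : ℕ, 1 ≤ k → (k : ℝ) * c < ∑ j ∈ Finset.Icc (n - N - k + 1) (n - N), xi M₀ M₁ ω j)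

lemma sum_Ioc_split (f : ℤ → ℝ) {m n k : ℤ} (h1 : m ≤ n) (h2 : n ≤ k) :
    ∑ j ∈ Finset.Ioc m n, f j + ∑ j ∈ Finset.Ioc n k, f j = ∑ j ∈ Finset.Ioc m k, f j := by
  rw [← Finset.sum_union]
  · congr 1
    ext x
    simp only [Finset.mem_union, Finset.mem_Ioc]
    omega
  · rw [Finset.disjoint_left]
    intro x hx hx'
    simp only [Finset.mem_Ioc] at hx hx'
    omega

lemma Icc_eq_Ioc (p q : ℤ) : Finset.Icc (p + 1) q = Finset.Ioc p q := by
  ext x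
  simp only [Finset.mem_Icc, Finset.mem_Ioc]
  omega

lemma sum_ones {M₀ M₁ : ℝ} {ω : ℤ → Bool} {a : ℤ} {W : ℕ}
    (hrun : ∀ j ∈ Finset.Icc (a + 1) (a + (W:ℤ)), ω j = true)
    (p q : ℤ) (hp : a ≤ p) (hq : q ≤ a + W) (hpq : p ≤ q) :
    ∑ j ∈ Finset.Ioc p q, xi M₀ M₁ ω j = ((q:ℝ) - (p:ℝ)) * M₀ := by
  have hconst : ∀ j ∈ Finset.Ioc p q, xi M₀ M₁ ω j = M₀ := by
    intro j hj
    simp only [Finset.mem_Ioc] at hj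
    have : ω j = true := hrun j (by simp only [Finset.mem_Icc]; omega)
    rw [xi, this, if_pos rfl]
  rw [Finset.sum_congr rfl hconst, Finset.sum_const, Int.card_Ioc, nsmul_eq_mul]
  congr 1
  have h0 : 0 ≤ q - p := by omega
  rw [← Int.cast_natCast, Int.toNat_of_nonneg h0]
  push_cast
  ring

lemma goodCand_center {M₀ M₁ c : ℝ} (hMc : c < M₀) (N i : ℕ) (a : ℤ) (ω : ℤ → Bool)
    (hω : ω ∈ GoodCand M₀ M₁ c N i a) :
    GoodCenter M₀ M₁ c N ω (a + N + (i + 1)) := by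
  set L : ℕ := i + 1 with hL
  set W : ℕ := Wf N i with hWd
  have hWL : W = 2 * N + 2 * L := by rw [hWd, Wf, hL]
  set n : ℤ := a + N + ((i:ℤ) + 1) with hn
  obtain ⟨⟨hrun', hfwd⟩, hbwd⟩ := hω
  have hrun : ∀ j ∈ Finset.Icc (a + 1) (a + (W:ℤ)), ω j = true := hrun'
  have hfwd' : ∀ k' : ℕ, ¬ (∑ j ∈ Finset.Icc (a + (W:ℤ) + 1) (a + (W:ℤ) + (k' + 1 : ℕ)),
      xi M₀ M₁ ω j ≤ ((k' : ℝ) + 1) * c - ((i:ℝ) + 1) * (M₀ - c)) := by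
    intro k' hk'
    exact hfwd (Set.mem_iUnion.2 ⟨k', hk'⟩)
  have hbwd' : ∀ k' : ℕ, ¬ (∑ j ∈ Finset.Icc (a - (k' + 1 : ℕ) + 1) a,
      xi M₀ M₁ ω j ≤ ((k' : ℝ) + 1) * c - ((i:ℝ) + 1) * (M₀ - c)) := by
    intro k' hk'
    exact hbwd (Set.mem_iUnion.2 ⟨k', hk'⟩)
  refine ⟨?_, ?_, ?_⟩
  · -- ones on the block
    intro j h1 h2
    apply hrun
    simp only [Finset.mem_Icc]
    omega
  · -- forward sums
    intro k hk
    rw [Icc_eq_Ioc]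
    by_cases hkL : k ≤ L
    · have heq := sum_ones (M₀ := M₀) (M₁ := M₁) hrun (n + N) (n + N + k)
        (by omega) (by omega) (by omega)
      rw [heq]
      have : ((n + N + (k:ℤ) : ℤ) : ℝ) - ((n + N : ℤ) : ℝ) = (k : ℝ) := by
        push_cast; ring
      rw [this]
      have hk0 : (0:ℝ) < k := by exact_mod_cast hk
      nlinarith
    · -- split at b := a + W
      push_neg at hkL
      set b : ℤ := a + (W:ℤ) with hb
      have hsplit : ∑ j ∈ Finset.Ioc (n + N) b, xi M₀ M₁ ω j +
          ∑ j ∈ Finset.Ioc b (n + N + k), xi M₀ M₁ ω j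
          = ∑ j ∈ Finset.Ioc (n + N) (n + N + k), xi M₀ M₁ ω j := by
        apply sum_Ioc_split
        · omega
        · omega
      rw [← hsplit]
      have hones := sum_ones (M₀ := M₀) (M₁ := M₁) hrun (n + N) b
        (by omega) (by omega) (by omega)
      have htail := hfwd' (k - L - 1)
      push_neg at htail
      have hidx : b + ((k - L - 1 : ℕ) + 1 : ℕ) = n + N + k := by omega
      rw [hidx, Icc_eq_Ioc] at htail
      have hcast : (((k - L - 1 : ℕ) : ℝ) + 1) = (k : ℝ) - (L : ℝ) := by
        have h1 : ((k - L - 1 : ℕ) : ℝ) + 1 = ((k - L : ℕ) : ℝ) := by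
          have h2 : (k - L - 1) + 1 = k - L := by omega
          exact_mod_cast congrArg (Nat.cast : ℕ → ℝ) h2
        rw [h1, Nat.cast_sub (by omega : L ≤ k)]
      rw [hcast] at htail
      have hiL : ((i:ℝ) + 1) = (L:ℝ) := by rw [hL]; push_cast; ring
      rw [hiL] at htail
      have hbn : ((b:ℤ):ℝ) - ((n + (N:ℤ) : ℤ):ℝ) = (L:ℝ) := by
        have hz : b - (n + (N:ℤ)) = (L:ℤ) := by omega
        exact_mod_cast congrArg (Int.cast : ℤ → ℝ) hz
      rw [hones, hbn]
      have hexp : ((k:ℝ) - L) * c - (L:ℝ) * (M₀ - c) = k * c - L * M₀ := by ring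
      linarith [htail, hexp.le]
  · -- backward sums
    intro k hk
    rw [Icc_eq_Ioc]
    have hnN : n - N = a + (L:ℤ) := by omega
    by_cases hkL : k ≤ L
    · have heq := sum_ones (M₀ := M₀) (M₁ := M₁) hrun (n - N - k) (n - N)
        (by omega) (by omega) (by omega)
      rw [heq]
      have : ((n - N : ℤ) : ℝ) - ((n - N - (k:ℤ) : ℤ) : ℝ) = (k : ℝ) := by
        push_cast; ring
      rw [this]
      have hk0 : (0:ℝ) < k := by exact_mod_cast hk
      nlinarith
    · push_neg at hkL
      have hsplit : ∑ j ∈ Finset.Ioc (n - N - k) a, xi M₀ M₁ ω j +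
          ∑ j ∈ Finset.Ioc a (n - N), xi M₀ M₁ ω j
          = ∑ j ∈ Finset.Ioc (n - N - k) (n - N), xi M₀ M₁ ω j := by
        apply sum_Ioc_split
        · omega
        · omega
      rw [← hsplit]
      have hones := sum_ones (M₀ := M₀) (M₁ := M₁) hrun a (n - N)
        (by omega) (by omega) (by omega)
      have htail := hbwd' (k - L - 1)
      push_neg at htail
      have hidx : a - ((k - L - 1 : ℕ) + 1 : ℕ) = n - N - k := by omega
      rw [hidx, Icc_eq_Ioc] at htail
      have hcast : (((k - L - 1 : ℕ) : ℝ) + 1) = (k : ℝ) - (L : ℝ) := by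
        have h1 : ((k - L - 1 : ℕ) : ℝ) + 1 = ((k - L : ℕ) : ℝ) := by
          have h2 : (k - L - 1) + 1 = k - L := by omega
          exact_mod_cast congrArg (Nat.cast : ℕ → ℝ) h2
        rw [h1, Nat.cast_sub (by omega : L ≤ k)]
      rw [hcast] at htail
      have hiL : ((i:ℝ) + 1) = (L:ℝ) := by rw [hL]; push_cast; ring
      rw [hiL] at htail
      have hbn : ((n - (N:ℤ) : ℤ):ℝ) - ((a:ℤ):ℝ) = (L:ℝ) := by
        have hz : (n - (N:ℤ)) - a = (L:ℤ) := by omega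
        exact_mod_cast congrArg (Int.cast : ℤ → ℝ) hz
      rw [hones, hbn]
      have hexp : ((k:ℝ) - L) * c - (L:ℝ) * (M₀ - c) = k * c - L * M₀ := by ring
      linarith [htail, hexp.le]

lemma exists_center_of_not_bad {M₀ M₁ c : ℝ} (hMc : c < M₀) {N i : ℕ} {o : ℤ}
    {ω : ℤ → Bool} (h : ω ∉ BadBlock M₀ M₁ c N o i) :
    ∃ n : ℤ, o ≤ n ∧ n ≤ o + (Kf N i : ℤ) * (Wf N i : ℤ) ∧ GoodCenter M₀ M₁ c N ω n := by
  rw [BadBlock, Set.mem_setOf_eq, not_not] at h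
  obtain ⟨j, hjK, hg⟩ := h
  refine ⟨o + j * (Wf N i : ℤ) + N + ((i:ℤ) + 1), ?_, ?_, ?_⟩
  · have h0 : (0:ℤ) ≤ (j:ℤ) * (Wf N i : ℤ) := by positivity
    omega
  · have hj1 : (j:ℤ) + 1 ≤ (Kf N i : ℤ) := by exact_mod_cast hjK
    have hmul : ((j:ℤ) + 1) * (Wf N i : ℤ) ≤ (Kf N i : ℤ) * (Wf N i : ℤ) :=
      mul_le_mul_of_nonneg_right hj1 (by positivity)
    have hWgt : (N:ℤ) + ((i:ℤ) + 1) < (Wf N i : ℤ) := by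
      have : Wf N i = 2 * N + 2 * (i + 1) := rfl
      omega
    nlinarith [hmul, hWgt]
  · exact goodCand_center hMc N i _ ω hg

lemma ae_centers (hP : IsBernoulli P) {M₀ M₁ c t : ℝ} (ht : 0 < t)
    (hθ : Real.exp (t * c) * ((Real.exp (-(t * M₀)) + Real.exp (t * M₁)) / 2) < 1)
    (hMc : c < M₀) (N : ℕ) :
    ∀ᵐ ω ∂P, (∀ m : ℤ, ∃ n, m ≤ n ∧ GoodCenter M₀ M₁ c N ω n) ∧
             (∀ m : ℤ, ∃ n, n ≤ m ∧ GoodCenter M₀ M₁ c N ω n) := by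
  have hRae := MeasureTheory.ae_eventually_notMem (μ := P)
    (tsum_badBlock_ne_top hP ht hθ hMc N (fun i => (i:ℤ)))
  have hLae := MeasureTheory.ae_eventually_notMem (μ := P)
    (tsum_badBlock_ne_top hP ht hθ hMc N
      (fun i => -(i:ℤ) - (Kf N i : ℤ) * (Wf N i : ℤ)))
  filter_upwards [hRae, hLae] with ω hR hL
  constructor
  · intro m
    obtain ⟨i₀, hi₀⟩ := Filter.eventually_atTop.1 hR
    have hnot := hi₀ (max i₀ m.toNat) (le_max_left _ _)
    obtain ⟨n, hn1, _, hgc⟩ := exists_center_of_not_bad hMc hnot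
    refine ⟨n, ?_, hgc⟩
    have h1 : m ≤ (m.toNat : ℤ) := Int.self_le_toNat m
    have h2 : (m.toNat : ℤ) ≤ ((max i₀ m.toNat : ℕ) : ℤ) := by
      exact_mod_cast le_max_right i₀ m.toNat
    omega
  · intro m
    obtain ⟨i₀, hi₀⟩ := Filter.eventually_atTop.1 hL
    have hnot := hi₀ (max i₀ (-m).toNat) (le_max_left _ _)
    obtain ⟨n, _, hn2, hgc⟩ := exists_center_of_not_bad hMc hnot
    refine ⟨n, ?_, hgc⟩
    have h1 : -m ≤ ((-m).toNat : ℤ) := Int.self_le_toNat (-m)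
    have h2 : ((-m).toNat : ℤ) ≤ ((max i₀ (-m).toNat : ℕ) : ℤ) := by
      exact_mod_cast le_max_right i₀ (-m).toNat
    omega

/-- selection of a two-sided strictly monotone sequence with gaps -/
lemma exists_sequence {Q : ℤ → Prop} (N : ℕ)
    (hup : ∀ m : ℤ, ∃ n, m ≤ n ∧ Q n) (hdn : ∀ m : ℤ, ∃ n, n ≤ m ∧ Q n) :
    ∃ n : ℤ → ℤ, StrictMono n ∧ Filter.Tendsto n Filter.atTop Filter.atTop ∧
      Filter.Tendsto n Filter.atBot Filter.atBot ∧
      (∀ i : ℤ, (2 * N : ℤ) < n (i + 1) - n i) ∧ ∀ i : ℤ, Q (n i) := by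
  classical
  choose f hf1 hf2 using hup
  choose g hg1 hg2 using hdn
  let u : ℕ → ℤ := fun k => Nat.rec (f 0) (fun _ prev => f (prev + (2 * N + 1))) k
  let v : ℕ → ℤ := fun k => Nat.rec (f 0) (fun _ prev => g (prev - (2 * N + 1))) k
  have hu_succ : ∀ k : ℕ, u (k + 1) = f (u k + (2 * N + 1)) := fun k => rfl
  have hv_succ : ∀ k : ℕ, v (k + 1) = g (v k - (2 * N + 1)) := fun k => rfl
  have hu0 : u 0 = f 0 := rfl
  have hv0 : v 0 = f 0 := rfl
  have huQ : ∀ k, Q (u k) := by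
    intro k
    cases k with
    | zero => exact hf2 0
    | succ k => rw [hu_succ]; exact hf2 _
  have hvQ : ∀ k, Q (v k) := by
    intro k
    cases k with
    | zero => exact hf2 0
    | succ k => rw [hv_succ]; exact hg2 _
  have hu_step : ∀ k : ℕ, u k + (2 * N + 1) ≤ u (k + 1) := by
    intro k; rw [hu_succ]; exact hf1 _
  have hv_step : ∀ k : ℕ, v (k + 1) ≤ v k - (2 * N + 1) := by
    intro k; rw [hv_succ]; exact hg1 _
  set n : ℤ → ℤ := fun i => if 0 ≤ i then u i.toNat else v (-i).toNat with hn
  have hstep : ∀ i : ℤ, n i + (2 * N + 1) ≤ n (i + 1) := by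
    intro i
    rcases lt_trichotomy i (-1) with h | h | h
    · have h1 : ¬ (0:ℤ) ≤ i := by omega
      have h2 : ¬ (0:ℤ) ≤ i + 1 := by omega
      rw [hn]
      simp only [if_neg h1, if_neg h2]
      have h3 : (-i).toNat = (-(i+1)).toNat + 1 := by omega
      rw [h3]
      have := hv_step ((-(i+1)).toNat)
      omega
    · subst h
      rw [hn]
      norm_num
      have h5 : v 1 ≤ u 0 - (2 * N + 1) := by
        have := hv_step 0
        rw [hv0, ← hu0] at this
        simpa using this
      omega
    · have h1 : (0:ℤ) ≤ i := by omega
      have h2 : (0:ℤ) ≤ i + 1 := by omega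
      rw [hn]
      simp only [if_pos h1, if_pos h2]
      have h3 : (i+1).toNat = i.toNat + 1 := by omega
      rw [h3]
      exact hu_step _
  have hlt : ∀ i : ℤ, n i < n (i + 1) := by
    intro i
    have := hstep i
    omega
  have hmono : StrictMono n := strictMono_int_of_lt_succ hlt
  have hshift : ∀ p q : ℤ, p ≤ q → n p + (q - p) ≤ n q := by
    intro p
    have H : ∀ q : ℤ, p ≤ q → n p + (q - p) ≤ n q := by
      refine Int.le_induction ?_ ?_
      · omega
      · intro m hm ih
        have := hlt m
        omega
    exact H
  refine ⟨n, hmono, ?_, ?_, ?_, ?_⟩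
  · rw [Filter.tendsto_atTop]
    intro b
    rw [Filter.eventually_atTop]
    refine ⟨max 0 (b - n 0), fun i hi => ?_⟩
    have h1 : (0:ℤ) ≤ i := le_trans (le_max_left _ _) hi
    have h2 : b - n 0 ≤ i := le_trans (le_max_right _ _) hi
    have := hshift 0 i h1
    omega
  · rw [Filter.tendsto_atBot]
    intro b
    rw [Filter.eventually_atBot]
    refine ⟨min 0 (b - n 0), fun i hi => ?_⟩
    have h1 : i ≤ 0 := le_trans hi (min_le_left _ _)
    have h2 : i ≤ b - n 0 := le_trans hi (min_le_right _ _)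
    have := hshift i 0 h1
    omega
  · intro i
    have := hstep i
    omega
  · intro i
    rw [hn]
    by_cases h : (0:ℤ) ≤ i
    · simp only [if_pos h]; exact huQ _
    · simp only [if_neg h]; exact hvQ _

end S12

/-- Lemma 4.4 (existence of a doubly infinite sequence of
coupling times). -/
theorem statement12
    (d : ℕ) (hd : 1 ≤ d) (M₀ M₁ : ℝ) (hM₀ : 0 ≤ M₀) (hM₁ : 0 ≤ M₁)
    (hl0 : 0 < (M₀ - 3 * M₁) / 2 - Real.log (2 * (d : ℝ) + 1))
    (P : Measure (ℤ → Bool)) (hP : IsBernoulli P)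
    (lam : ℝ) (hlam : 0 < lam)
    (hlam' : lam < (M₀ - 3 * M₁) / 2 - Real.log (2 * (d : ℝ) + 1))
    (N : ℕ) :
    ∀ᵐ ω ∂P, ∃ n : ℤ → ℤ, StrictMono n ∧
      Filter.Tendsto n Filter.atTop Filter.atTop ∧
      Filter.Tendsto n Filter.atBot Filter.atBot ∧
      ∀ i : ℤ,
        (2 * N : ℤ) < n (i + 1) - n i ∧
        (∀ j : ℤ, n i - N + 1 ≤ j → j ≤ n i + N → ω j = true) ∧
        (∀ k : ℕ, 1 ≤ k →
          (k : ℝ) * (M₁ + lam + Real.log (2 * (d : ℝ) + 1)) <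
            ∑ j ∈ Finset.Icc (n i + N + 1) (n i + N + k), xi M₀ M₁ ω j) ∧
        (∀ k : ℕ, 1 ≤ k →
          (k : ℝ) * (M₁ + lam + Real.log (2 * (d : ℝ) + 1)) <
            ∑ j ∈ Finset.Icc (n i - N - k + 1) (n i - N), xi M₀ M₁ ω j) := by
  have hone : (1:ℝ) ≤ 2 * (d:ℝ) + 1 := by
    have : (0:ℝ) ≤ (d:ℝ) := Nat.cast_nonneg d
    linarith
  have hlog0 : 0 ≤ Real.log (2 * (d:ℝ) + 1) := Real.log_nonneg hone
  set c : ℝ := M₁ + lam + Real.log (2 * (d:ℝ) + 1) with hc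
  have hc0 : 0 ≤ c := by rw [hc]; positivity
  have hMc : c < M₀ := by
    have h1 : 2 * c + M₁ < M₀ := by rw [hc]; linarith [hlam']
    linarith
  obtain ⟨t, ht, hθraw⟩ := exists_chernoff_t (c - M₀) (c + M₁) (by linarith)
  have hθ : Real.exp (t * c) * ((Real.exp (-(t * M₀)) + Real.exp (t * M₁)) / 2) < 1 := by
    have e1 : Real.exp (t * c) * Real.exp (-(t * M₀)) = Real.exp (t * (c - M₀)) := by
      rw [← Real.exp_add]; congr 1; ring
    have e2 : Real.exp (t * c) * Real.exp (t * M₁) = Real.exp (t * (c + M₁)) := by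
      rw [← Real.exp_add]; congr 1; ring
    have he : Real.exp (t * c) * ((Real.exp (-(t * M₀)) + Real.exp (t * M₁)) / 2)
        = (Real.exp (t * (c - M₀)) + Real.exp (t * (c + M₁))) / 2 := by
      calc Real.exp (t * c) * ((Real.exp (-(t * M₀)) + Real.exp (t * M₁)) / 2)
          = (Real.exp (t * c) * Real.exp (-(t * M₀))
            + Real.exp (t * c) * Real.exp (t * M₁)) / 2 := by ring
        _ = _ := by rw [e1, e2]
    rw [he]; exact hθraw
  filter_upwards [ae_centers hP ht hθ hMc N] with ω hω
  obtain ⟨n, hmono, htop, hbot, hgap, hQ⟩ := exists_sequence N hω.1 hω.2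
  exact ⟨n, hmono, htop, hbot, fun i => ⟨hgap i, (hQ i).1, (hQ i).2.1, (hQ i).2.2⟩⟩

end BKpaper
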